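/- arXiv:2311.11890 — 3 statements merged into one kernel-verified Lean document; each statement's English description precedes it below -/
import Mathlib

section
/- Let X be a finite type with N elements and let r satisfy 1 ≤ r ≤ N. Let μ be the PMF on (X → Bool) × X obtained by first drawing f uniformly from F^r(X) and then drawing x uniformly from the (nonempty) set {x : f x = true}, outputting the pair (f, x). Let ν be the PMF obtained by first drawing g uniformly from F^{r-1}(X) and then drawing y uniformly from the (nonempty) set {y : g y = false}, outputting the pair (Function.update g y true, y). Then μ = ν. -/
open scoped ENNReal

lemma stmt4_card_aux (X : Type) [Fintype X] [DecidableEq X] (t : ℕ) :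
    Fintype.card {f : X → Bool // (Finset.univ.filter fun x => f x = true).card = t}
      = (Fintype.card X).choose t := by
  rw [← Fintype.card_finset_len]
  apply Fintype.card_congr
  refine ⟨fun f => ⟨Finset.univ.filter fun x => f.1 x = true, f.2⟩,
          fun s => ⟨fun x => decide (x ∈ s.1), by simpa using s.2⟩, ?_, ?_⟩
  · rintro ⟨f, hf⟩; ext x; simp
  · rintro ⟨s, hs⟩; ext x; simp

lemma stmt4_eval_aux {γ : Type*} [DecidableEq γ] {A : Type*} [Fintype A] (hA : Nonempty A)
    {B : A → Type*} [∀ a, Fintype (B a)] (hB : ∀ a, Nonempty (B a))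
    (F : ∀ a, B a → γ) (p : γ) :
    ((@PMF.uniformOfFintype A _ hA).bind fun a =>
        (@PMF.uniformOfFintype (B a) _ (hB a)).map (F a)) p
      = ∑ a : A, ∑ b : B a,
          if p = F a b then ((Fintype.card A : ℝ≥0∞)⁻¹ * (Fintype.card (B a) : ℝ≥0∞)⁻¹) else 0 := by
  simp only [PMF.bind_apply, PMF.map_apply, PMF.uniformOfFintype_apply, tsum_fintype]
  refine Finset.sum_congr rfl fun a _ => ?_
  rw [Finset.mul_sum]
  refine Finset.sum_congr rfl fun b _ => ?_
  split <;> simp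

lemma stmt4_sum_point {M : Type*} [AddCommMonoid M] {A : Type*} [Fintype A] [DecidableEq A]
    {P : A → Prop} [DecidablePred P] (a : A) (f : A → M) :
    ∑ b : {x // P x}, (if a = b.1 then f b.1 else 0) = if P a then f a else 0 := by
  rw [← Finset.sum_subtype (Finset.univ.filter P) (fun x => by simp)
      (fun b => if a = b then f b else 0)]
  rw [Finset.sum_ite_eq]
  simp

lemma stmt4_cond_iff {X : Type} [DecidableEq X] (g h : X → Bool) (x : X) :
    (g x = false ∧ h = Function.update g x true) ↔
      (h x = true ∧ Function.update h x false = g) := by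
  constructor
  · rintro ⟨h1, rfl⟩
    refine ⟨by simp, ?_⟩
    rw [Function.update_idem, ← h1, Function.update_eq_self]
  · rintro ⟨h1, rfl⟩
    refine ⟨by simp, ?_⟩
    rw [Function.update_idem, ← h1, Function.update_eq_self]

/-- drawing `f` uniformly from `F^r(X)` and then `x` uniformly from
`{x | f x = true}` gives the same joint distribution on pairs `(f, x)` as drawing
`g` uniformly from `F^{r-1}(X)`, then `y` uniformly from `{y | g y = false}`, and
outputting `(Function.update g y true, y)`. -/
theorem stmt_4 (X : Type) [Fintype X] [DecidableEq X] (N r : ℕ)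
    (hN : Fintype.card X = N) (hr1 : 1 ≤ r) (hrN : r ≤ N)
    (hF : Nonempty {f : X → Bool // (Finset.univ.filter fun x => f x = true).card = r})
    (hG : Nonempty {g : X → Bool // (Finset.univ.filter fun x => g x = true).card = r - 1})
    (hTf : ∀ f : {f : X → Bool // (Finset.univ.filter fun x => f x = true).card = r},
        Nonempty {x : X // f.1 x = true})
    (hTg : ∀ g : {g : X → Bool // (Finset.univ.filter fun x => g x = true).card = r - 1},
        Nonempty {y : X // g.1 y = false}) :
    ((@PMF.uniformOfFintype
        {f : X → Bool // (Finset.univ.filter fun x => f x = true).card = r} _ hF).bind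
      fun f =>
        (@PMF.uniformOfFintype {x : X // f.1 x = true} _ (hTf f)).map
          fun x => ((f.1, x.1) : (X → Bool) × X))
      =
    ((@PMF.uniformOfFintype
        {g : X → Bool // (Finset.univ.filter fun x => g x = true).card = r - 1} _ hG).bind
      fun g =>
        (@PMF.uniformOfFintype {y : X // g.1 y = false} _ (hTg g)).map
          fun y => ((Function.update g.1 y.1 true, y.1) : (X → Bool) × X)) := by
  classical
  have cardF : Fintype.card {f : X → Bool // (Finset.univ.filter fun x => f x = true).card = r}
      = N.choose r := by rw [stmt4_card_aux, hN]
  have cardG :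
      Fintype.card {g : X → Bool // (Finset.univ.filter fun x => g x = true).card = r - 1}
      = N.choose (r - 1) := by rw [stmt4_card_aux, hN]
  have key : ((N.choose (r-1) : ℝ≥0∞))⁻¹ * (((N - (r-1)) : ℕ) : ℝ≥0∞)⁻¹
      = ((N.choose r : ℝ≥0∞))⁻¹ * ((r : ℕ) : ℝ≥0∞)⁻¹ := by
    rw [← ENNReal.mul_inv (Or.inr (ENNReal.natCast_ne_top _)) (Or.inl (ENNReal.natCast_ne_top _)),
        ← ENNReal.mul_inv (Or.inr (ENNReal.natCast_ne_top _)) (Or.inl (ENNReal.natCast_ne_top _)),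
        ← Nat.cast_mul, ← Nat.cast_mul]
    congr 2
    have h1 := Nat.choose_succ_right_eq N (r - 1)
    have hr : r - 1 + 1 = r := by clear cardF cardG; omega
    rw [hr] at h1
    clear cardF cardG
    omega
  ext ⟨h, x⟩
  rw [stmt4_eval_aux, stmt4_eval_aux]
  -- LHS computation
  have hL : (∑ f : {f : X → Bool // (Finset.univ.filter fun x => f x = true).card = r},
        ∑ x' : {x' : X // f.1 x' = true},
          if ((h, x) : (X → Bool) × X) = (f.1, x'.1) then
            ((Fintype.card {f : X → Bool // (Finset.univ.filter fun x => f x = true).card = r}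
              : ℝ≥0∞)⁻¹ * (Fintype.card {x' : X // f.1 x' = true} : ℝ≥0∞)⁻¹) else 0)
      = if ((Finset.univ.filter fun y => h y = true).card = r ∧ h x = true) then
          ((N.choose r : ℝ≥0∞))⁻¹ * ((r : ℕ) : ℝ≥0∞)⁻¹ else 0 := by
    have step : ∀ f : {f : X → Bool // (Finset.univ.filter fun x => f x = true).card = r},
        (∑ x' : {x' : X // f.1 x' = true},
          if ((h, x) : (X → Bool) × X) = (f.1, x'.1) then
            ((Fintype.card {f : X → Bool // (Finset.univ.filter fun x => f x = true).card = r}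
              : ℝ≥0∞)⁻¹ * (Fintype.card {x' : X // f.1 x' = true} : ℝ≥0∞)⁻¹) else 0)
        = if h = f.1 then
            (if h x = true then ((N.choose r : ℝ≥0∞))⁻¹ * ((r : ℕ) : ℝ≥0∞)⁻¹ else 0) else 0 := by
      intro f
      have hc : (Fintype.card {x' : X // f.1 x' = true} : ℝ≥0∞) = ((r : ℕ) : ℝ≥0∞) := by
        rw [Fintype.card_subtype, f.2]
      by_cases hf : h = f.1
      · simp only [Prod.mk.injEq, ite_and, hf, eq_self_iff_true, if_true, hc, cardF]
        exact stmt4_sum_point x fun _ => ((N.choose r : ℝ≥0∞))⁻¹ * ((r : ℕ) : ℝ≥0∞)⁻¹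
      · rw [if_neg hf]
        refine Finset.sum_eq_zero fun x' _ => ?_
        rw [if_neg]
        intro he
        exact hf (congrArg Prod.fst he)
    rw [Finset.sum_congr rfl fun f _ => step f]
    rw [stmt4_sum_point h
      (fun _ => if h x = true then ((N.choose r : ℝ≥0∞))⁻¹ * ((r : ℕ) : ℝ≥0∞)⁻¹ else 0)]
    rw [← ite_and]
  rw [hL]
  -- RHS computation
  have hcG : ∀ g : {g : X → Bool // (Finset.univ.filter fun x => g x = true).card = r - 1},
      (Fintype.card {y : X // g.1 y = false} : ℝ≥0∞) = (((N - (r-1)) : ℕ) : ℝ≥0∞) := by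
    intro g
    rw [Fintype.card_subtype]
    congr 1
    have h2 := Finset.card_filter_add_card_filter_not
      (s := (Finset.univ : Finset X)) (p := fun y => g.1 y = true)
    simp only [Bool.not_eq_true] at h2
    have h3 := g.2
    have h4 : (Finset.univ : Finset X).card = N := by rw [Finset.card_univ, hN]
    clear cardF cardG key hL
    omega
  have step2 : ∀ g : {g : X → Bool // (Finset.univ.filter fun x => g x = true).card = r - 1},
      (∑ y : {y : X // g.1 y = false},
        if ((h, x) : (X → Bool) × X) = (Function.update g.1 y.1 true, y.1) then
          ((Fintype.card {g : X → Bool // (Finset.univ.filter fun x => g x = true).card = r - 1}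
            : ℝ≥0∞)⁻¹ * (Fintype.card {y : X // g.1 y = false} : ℝ≥0∞)⁻¹) else 0)
      = if h x = true then
          (if Function.update h x false = g.1 then
            ((N.choose (r-1) : ℝ≥0∞))⁻¹ * (((N - (r-1)) : ℕ) : ℝ≥0∞)⁻¹ else 0) else 0 := by
    intro g
    simp only [hcG g, cardG, Prod.mk.injEq, and_comm (a := h = _), ite_and]
    rw [stmt4_sum_point x
      (fun y => if h = Function.update g.1 y true then
        ((N.choose (r-1) : ℝ≥0∞))⁻¹ * (((N - (r-1)) : ℕ) : ℝ≥0∞)⁻¹ else 0)]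
    rw [← ite_and]
    simp only [stmt4_cond_iff]
    rw [ite_and]
  rw [Finset.sum_congr rfl fun g _ => step2 g]
  by_cases hx : h x = true
  · simp only [hx, eq_self_iff_true, if_true, and_true]
    rw [stmt4_sum_point (Function.update h x false)
      (fun _ => ((N.choose (r-1) : ℝ≥0∞))⁻¹ * (((N - (r-1)) : ℕ) : ℝ≥0∞)⁻¹)]
    have hiff : ((Finset.univ.filter fun y => Function.update h x false y = true).card = r - 1)
        ↔ ((Finset.univ.filter fun y => h y = true).card = r) := by
      have herase : (Finset.univ.filter fun y => Function.update h x false y = true)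
          = (Finset.univ.filter fun y => h y = true).erase x := by
        ext y
        by_cases hy : y = x
        · simp [hy]
        · simp [Function.update_apply, hy]
      have hmem : x ∈ Finset.univ.filter (fun y => h y = true) := by simp [hx]
      have hcard := Finset.card_erase_of_mem hmem
      have hpos : 1 ≤ (Finset.univ.filter fun y => h y = true).card :=
        Finset.card_pos.mpr ⟨x, hmem⟩
      rw [herase, hcard]
      clear cardF cardG key hL step2 hcG
      omega
    by_cases hcard : (Finset.univ.filter fun y => h y = true).card = r
    · rw [if_pos hcard, if_pos (hiff.mpr hcard), key]
    · rw [if_neg hcard, if_neg (fun hc => hcard (hiff.mp hc))]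
  · simp [hx]
end

section
/- Let X be a finite type with N elements and let t satisfy 0 ≤ t ≤ N − 1. Let μ be the PMF on (X → Bool) × X obtained by drawing g uniformly from F^t(X) and, independently, y uniformly from X, outputting (g, y). Let ν be the PMF obtained by drawing g uniformly from F^t(X) and then drawing y uniformly from the (nonempty) set {y : g y = false}, outputting (g, y). Then for every set E of pairs, |μ(E) − ν(E)| ≤ t / N. -/
open scoped ENNReal NNReal

lemma aux_real (N t s u : ℕ) (ht : t < N) (hs : s ≤ N - t) (hu : u ≤ t) :
    |((s : ℝ) + u) / N - (s : ℝ) / ((N : ℝ) - t)| ≤ (t : ℝ) / N := by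
  have hN0 : (0:ℝ) < N := by exact_mod_cast Nat.lt_of_le_of_lt (Nat.zero_le t) ht
  have hNt : (0:ℝ) < (N:ℝ) - t := by
    have : (t:ℝ) < N := by exact_mod_cast ht
    linarith
  have hs' : (s:ℝ) ≤ (N:ℝ) - t := by
    have : (s:ℝ) ≤ ((N - t : ℕ) : ℝ) := by exact_mod_cast hs
    rw [Nat.cast_sub ht.le] at this
    linarith
  have hu' : (u:ℝ) ≤ t := by exact_mod_cast hu
  have ht' : (0:ℝ) ≤ t := by positivity
  have h1 : (0:ℝ) ≤ ((s:ℝ)+u)/N - (s:ℝ)/((N:ℝ)-t) + t/N := by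
    have h : ((s:ℝ)+u)/N - (s:ℝ)/((N:ℝ)-t) + t/N
        = ((u * ((N:ℝ)-t) + t*(((N:ℝ)-t) - s))) / (N * ((N:ℝ)-t)) := by
      field_simp; ring
    rw [h]
    apply div_nonneg
    · nlinarith
    · positivity
  have h2 : (0:ℝ) ≤ (t:ℝ)/N - (((s:ℝ)+u)/N - (s:ℝ)/((N:ℝ)-t)) := by
    have h : (t:ℝ)/N - (((s:ℝ)+u)/N - (s:ℝ)/((N:ℝ)-t))
        = ((t - u) * ((N:ℝ)-t) + s*t) / (N * ((N:ℝ)-t)) := by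
      field_simp; ring
    rw [h]
    apply div_nonneg
    · nlinarith
    · positivity
  rw [abs_le]
  constructor <;> linarith

/-- the pair `(g, y)` with `g` uniform on `F^t(X)` and `y` uniform on `X`
(independent) is within total-variation distance `t / N` of the pair `(g, y)` with `g`
uniform on `F^t(X)` and then `y` uniform on `{y | g y = false}`. -/
theorem stmt_5 (X : Type) [Fintype X] [DecidableEq X] (N t : ℕ)
    (hN : Fintype.card X = N) (hN1 : 1 ≤ N) (htN : t ≤ N - 1)
    (hX : Nonempty X)
    (hF : Nonempty {g : X → Bool // (Finset.univ.filter fun x => g x = true).card = t})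
    (hT : ∀ g : {g : X → Bool // (Finset.univ.filter fun x => g x = true).card = t},
        Nonempty {y : X // g.1 y = false}) :
    let μ : PMF ((X → Bool) × X) :=
      (@PMF.uniformOfFintype
          {g : X → Bool // (Finset.univ.filter fun x => g x = true).card = t} _ hF).bind
        fun g => (@PMF.uniformOfFintype X _ hX).map fun y => (g.1, y)
    let ν : PMF ((X → Bool) × X) :=
      (@PMF.uniformOfFintype
          {g : X → Bool // (Finset.univ.filter fun x => g x = true).card = t} _ hF).bind
        fun g => (@PMF.uniformOfFintype {y : X // g.1 y = false} _ (hT g)).map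
          fun y => (g.1, y.1)
    ∀ E : Set ((X → Bool) × X),
      |(μ.toOuterMeasure E).toReal - (ν.toOuterMeasure E).toReal| ≤ (t : ℝ) / (N : ℝ) := by
  intro μ ν E
  classical
  have htN' : t < N := by omega
  simp only [μ, ν, PMF.toOuterMeasure_bind_apply, PMF.toOuterMeasure_map_apply,
    PMF.uniformOfFintype_apply, PMF.toOuterMeasure_uniformOfFintype_apply, tsum_fintype]
  set F := {g : X → Bool // (Finset.univ.filter fun x => g x = true).card = t} with hFdef
  set K := Fintype.card F with hKdef
  have hK0 : 0 < K := Fintype.card_pos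
  -- cardinality of the subtype {y // a.1 y = false}
  have hsub : ∀ a : F, Fintype.card {y : X // a.1 y = false} = N - t := by
    intro a
    rw [Fintype.card_subtype]
    have hsplit := Finset.card_filter_add_card_filter_not
      (s := (Finset.univ : Finset X)) (p := fun y => a.1 y = false)
    have hne : (Finset.univ.filter fun y => ¬ a.1 y = false)
        = (Finset.univ.filter fun y => a.1 y = true) := by
      apply Finset.filter_congr; intro y _; simp
    rw [hne, a.2, Finset.card_univ, hN] at hsplit
    omega
  -- counts
  set s : F → ℕ := fun a => (Finset.univ.filter fun y => a.1 y = false ∧ (a.1, y) ∈ E).card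
    with hsdef
  set u : F → ℕ := fun a => (Finset.univ.filter fun y => a.1 y = true ∧ (a.1, y) ∈ E).card
    with hudef
  have hcard1 : ∀ a : F, Fintype.card ((fun y => (a.1, y)) ⁻¹' E) = s a + u a := by
    intro a
    have : Fintype.card ((fun y => (a.1, y)) ⁻¹' E)
        = (Finset.univ.filter fun y => (a.1, y) ∈ E).card := by
      rw [← Set.toFinset_card]
      congr 1
      ext y
      simp [Set.mem_toFinset]
    rw [this]
    have hsplit := Finset.card_filter_add_card_filter_not
      (s := (Finset.univ.filter fun y => (a.1, y) ∈ E)) (p := fun y => a.1 y = false)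
    rw [Finset.filter_filter, Finset.filter_filter] at hsplit
    have e1 : (Finset.univ.filter fun y => (a.1, y) ∈ E ∧ a.1 y = false)
        = (Finset.univ.filter fun y => a.1 y = false ∧ (a.1, y) ∈ E) := by
      apply Finset.filter_congr; intro y _; tauto
    have e2 : (Finset.univ.filter fun y => (a.1, y) ∈ E ∧ ¬ a.1 y = false)
        = (Finset.univ.filter fun y => a.1 y = true ∧ (a.1, y) ∈ E) := by
      apply Finset.filter_congr; intro y _; simp; tauto
    rw [e1, e2] at hsplit
    simp only [hsdef, hudef]
    omega
  have hcard2 : ∀ a : F,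
      Fintype.card ((fun y : {y : X // a.1 y = false} => (a.1, y.1)) ⁻¹' E) = s a := by
    intro a
    have e : ((fun y : {y : X // a.1 y = false} => (a.1, y.1)) ⁻¹' E)
        ≃ {y : X // a.1 y = false ∧ (a.1, y) ∈ E} :=
      (Equiv.subtypeSubtypeEquivSubtypeInter (fun y => a.1 y = false)
        (fun y => (a.1, y) ∈ E))
    rw [Fintype.card_congr e, Fintype.card_subtype]
  have hs_le : ∀ a : F, s a ≤ N - t := by
    intro a
    have := hsub a
    rw [Fintype.card_subtype] at this
    calc s a ≤ (Finset.univ.filter fun y => a.1 y = false).card := by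
          apply Finset.card_le_card
          intro y hy
          simp only [Finset.mem_filter] at hy ⊢
          exact ⟨hy.1, hy.2.1⟩
      _ = N - t := this
  have hu_le : ∀ a : F, u a ≤ t := by
    intro a
    calc u a ≤ (Finset.univ.filter fun y => a.1 y = true).card := by
          apply Finset.card_le_card
          intro y hy
          simp only [Finset.mem_filter] at hy ⊢
          exact ⟨hy.1, hy.2.1⟩
      _ = t := a.2
  -- convert to real sums
  have hKne : ((K : ℝ≥0∞))⁻¹ ≠ ⊤ := by
    rw [ENNReal.inv_ne_top]
    exact_mod_cast hK0.ne'
  have hterm1 : ∀ a ∈ (Finset.univ : Finset F),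
      ((K : ℝ≥0∞))⁻¹ * ((Fintype.card ((fun y => (a.1, y)) ⁻¹' E) : ℝ≥0∞)
        / (Fintype.card X : ℝ≥0∞)) ≠ ⊤ := by
    intro a _
    apply ENNReal.mul_ne_top hKne
    refine (ENNReal.div_lt_top (by simp) ?_).ne
    intro hc
    rw [Nat.cast_eq_zero, hN] at hc
    omega
  have hterm2 : ∀ a ∈ (Finset.univ : Finset F),
      ((K : ℝ≥0∞))⁻¹ * ((Fintype.card ((fun y : {y : X // a.1 y = false} => (a.1, y.1)) ⁻¹' E) : ℝ≥0∞)
        / (Fintype.card {y : X // a.1 y = false} : ℝ≥0∞)) ≠ ⊤ := by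
    intro a _
    apply ENNReal.mul_ne_top hKne
    refine (ENNReal.div_lt_top (by simp) ?_).ne
    have h := hsub a
    intro hc
    rw [Nat.cast_eq_zero] at hc
    omega
  rw [ENNReal.toReal_sum hterm1, ENNReal.toReal_sum hterm2, ← Finset.sum_sub_distrib]
  refine le_trans (Finset.abs_sum_le_sum_abs _ _) ?_
  have hbound : ∀ a ∈ (Finset.univ : Finset F),
      |(((K : ℝ≥0∞))⁻¹ * ((Fintype.card ((fun y => (a.1, y)) ⁻¹' E) : ℝ≥0∞)
          / (Fintype.card X : ℝ≥0∞))).toReal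
        - (((K : ℝ≥0∞))⁻¹ * ((Fintype.card ((fun y : {y : X // a.1 y = false} => (a.1, y.1)) ⁻¹' E) : ℝ≥0∞)
          / (Fintype.card {y : X // a.1 y = false} : ℝ≥0∞))).toReal|
      ≤ (K : ℝ)⁻¹ * ((t : ℝ) / N) := by
    intro a _
    rw [ENNReal.toReal_mul, ENNReal.toReal_mul, ENNReal.toReal_div, ENNReal.toReal_div,
      ENNReal.toReal_inv]
    simp only [ENNReal.toReal_natCast]
    rw [← mul_sub, abs_mul, abs_of_nonneg (by positivity : (0:ℝ) ≤ ((K:ℝ))⁻¹)]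
    apply mul_le_mul_of_nonneg_left _ (by positivity)
    rw [hcard1 a, hcard2 a, hsub a, hN]
    have hNt : ((N - t : ℕ) : ℝ) = (N : ℝ) - t := by
      rw [Nat.cast_sub htN'.le]
    rw [hNt]
    have := aux_real N t (s a) (u a) htN' (hs_le a) (hu_le a)
    push_cast
    exact this
  refine le_trans (Finset.sum_le_sum hbound) ?_
  rw [Finset.sum_const, Finset.card_univ, ← hKdef, nsmul_eq_mul]
  rw [← mul_assoc, mul_inv_cancel₀ (by exact_mod_cast hK0.ne' : (K:ℝ) ≠ 0), one_mul]
end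

section
/- Let X be a finite type with N elements and let r satisfy 1 ≤ r ≤ N. Let μ be the PMF on (X → Bool) × X obtained by drawing f uniformly from F^r(X) and then drawing x uniformly from the (nonempty) set {x : f x = true}, outputting (f, x). Let ρ be the PMF obtained by drawing g uniformly from F^{r-1}(X) and, independently, y uniformly from X, outputting (Function.update g y true, y). Then for every set E of pairs, |μ(E) − ρ(E)| ≤ (r − 1) / N. -/
open Finset
open scoped ENNReal

lemma update_eq_cases {X : Type} [DecidableEq X] (g h : X → Bool) (x : X)
    (he : Function.update g x true = h) :
    h x = true ∧ (g = h ∨ g = Function.update h x false) := by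
  subst he
  refine ⟨Function.update_self _ _ _, ?_⟩
  cases hg : g x
  · right; funext z; rcases eq_or_ne z x with rfl | hz
    · simp [hg]
    · simp [Function.update_of_ne hz]
  · left; funext z; rcases eq_or_ne z x with rfl | hz
    · simp [hg]
    · simp [Function.update_of_ne hz]

lemma filt_update_false {X : Type} [Fintype X] [DecidableEq X] (h : X → Bool) (x : X) :
    (Finset.univ.filter fun y => Function.update h x false y = true)
      = (Finset.univ.filter fun y => h y = true).erase x := by
  ext y
  rcases eq_or_ne y x with rfl | hy
  · simp
  · simp [Function.update_of_ne hy, hy]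

lemma card_update_false {X : Type} [Fintype X] [DecidableEq X] (h : X → Bool) (x : X)
    (hx : h x = true) :
    (Finset.univ.filter fun y => Function.update h x false y = true).card
      = (Finset.univ.filter fun y => h y = true).card - 1 := by
  rw [filt_update_false]
  exact Finset.card_erase_of_mem (by simp [hx])

lemma update_true_self {X : Type} [DecidableEq X] (h : X → Bool) (x : X) (hx : h x = true) :
    Function.update h x true = h := by
  conv_lhs => rw [← hx]
  exact Function.update_eq_self x h

lemma update_update_true {X : Type} [DecidableEq X] (h : X → Bool) (x : X) (hx : h x = true) :
    Function.update (Function.update h x false) x true = h := by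
  rw [Function.update_idem, ← hx, Function.update_eq_self]

/-- the pair `(f, x)` with `f` uniform on `F^r(X)`, then `x` uniform on
`{x | f x = true}`, is within total-variation distance `(r-1)/N` of the pair
`(Function.update g y true, y)` with `g` uniform on `F^{r-1}(X)` and `y` uniform on `X`,
independently. -/
theorem stmt_6 (X : Type) [Fintype X] [DecidableEq X] (N r : ℕ)
    (hN : Fintype.card X = N) (hr1 : 1 ≤ r) (hrN : r ≤ N)
    (hX : Nonempty X)
    (hF : Nonempty {f : X → Bool // (Finset.univ.filter fun x => f x = true).card = r})
    (hG : Nonempty {g : X → Bool // (Finset.univ.filter fun x => g x = true).card = r - 1})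
    (hTf : ∀ f : {f : X → Bool // (Finset.univ.filter fun x => f x = true).card = r},
        Nonempty {x : X // f.1 x = true}) :
    let μ : PMF ((X → Bool) × X) :=
      (@PMF.uniformOfFintype
          {f : X → Bool // (Finset.univ.filter fun x => f x = true).card = r} _ hF).bind
        fun f => (@PMF.uniformOfFintype {x : X // f.1 x = true} _ (hTf f)).map
          fun x => (f.1, x.1)
    let ρ : PMF ((X → Bool) × X) :=
      (@PMF.uniformOfFintype
          {g : X → Bool // (Finset.univ.filter fun x => g x = true).card = r - 1} _ hG).bind
        fun g => (@PMF.uniformOfFintype X _ hX).map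
          fun y => (Function.update g.1 y true, y)
    ∀ E : Set ((X → Bool) × X),
      |(μ.toOuterMeasure E).toReal - (ρ.toOuterMeasure E).toReal|
        ≤ ((r - 1 : ℕ) : ℝ) / (N : ℝ) := by
  intro μ ρ E
  classical
  set A := Fintype.card {f : X → Bool // (Finset.univ.filter fun x => f x = true).card = r} with hA
  set B := Fintype.card {g : X → Bool // (Finset.univ.filter fun x => g x = true).card = r - 1} with hB
  have hμdef : μ = (@PMF.uniformOfFintype
          {f : X → Bool // (Finset.univ.filter fun x => f x = true).card = r} _ hF).bind
        (fun f => (@PMF.uniformOfFintype {x : X // f.1 x = true} _ (hTf f)).map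
          fun x => (f.1, x.1)) := rfl
  have hρdef : ρ = (@PMF.uniformOfFintype
          {g : X → Bool // (Finset.univ.filter fun x => g x = true).card = r - 1} _ hG).bind
        (fun g => (@PMF.uniformOfFintype X _ hX).map
          fun y => (Function.update g.1 y true, y)) := rfl
  clear_value μ ρ A B
  -- pointwise value of μ
  have hμ : ∀ p : (X → Bool) × X,
      μ p = if (Finset.univ.filter fun x => p.1 x = true).card = r ∧ p.1 p.2 = true
        then ((A : ℝ≥0∞) * r)⁻¹ else 0 := by
    intro p
    rw [hμdef, PMF.bind_apply]
    have hinner : ∀ f : {f : X → Bool // (Finset.univ.filter fun x => f x = true).card = r},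
        ((@PMF.uniformOfFintype {x : X // f.1 x = true} _ (hTf f)).map fun x => (f.1, x.1)) p
          = if p.1 = f.1 ∧ p.1 p.2 = true then ((r : ℝ≥0∞))⁻¹ else 0 := by
      intro f
      haveI := hTf f
      rw [PMF.map_apply]
      by_cases hc : p.1 = f.1 ∧ p.1 p.2 = true
      · obtain ⟨h1, h2⟩ := hc
        have hx : f.1 p.2 = true := h1 ▸ h2
        rw [tsum_eq_single (⟨p.2, hx⟩ : {x : X // f.1 x = true})]
        · rw [if_pos (show p = (↑f, ((⟨p.2, hx⟩ : {x : X // f.1 x = true}) : X)) from Prod.ext_iff.2 ⟨h1, rfl⟩),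
            if_pos ⟨h1, h2⟩, PMF.uniformOfFintype_apply, Fintype.card_subtype, f.2]
        · intro x hx'
          rw [if_neg]
          intro hp
          exact hx' (Subtype.ext (congrArg Prod.snd hp).symm)
      · rw [if_neg hc]
        refine ENNReal.tsum_eq_zero.2 fun x => ?_
        rw [if_neg]
        intro hp
        exact hc ⟨congrArg Prod.fst hp, by rw [congrArg Prod.snd hp, congrArg Prod.fst hp]; exact x.2⟩
    simp only [hinner, PMF.uniformOfFintype_apply, ← hA]
    by_cases hcard : (Finset.univ.filter fun x => p.1 x = true).card = r
    · rw [tsum_eq_single (⟨p.1, hcard⟩ : {f : X → Bool // (Finset.univ.filter fun x => f x = true).card = r})]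
      · by_cases hpt : p.1 p.2 = true
        · rw [if_pos ⟨rfl, hpt⟩, if_pos ⟨hcard, hpt⟩,
            ENNReal.mul_inv (Or.inl (Nat.cast_ne_zero.2 (hA ▸ @Fintype.card_ne_zero _ _ hF))) (by left; exact ENNReal.natCast_ne_top A)]
        · simp [hpt]
      · intro f hf
        rw [if_neg, mul_zero]
        intro h
        exact hf (Subtype.ext h.1.symm)
    · rw [if_neg (fun h => hcard h.1)]
      refine ENNReal.tsum_eq_zero.2 fun f => ?_
      rw [if_neg, mul_zero]
      intro h
      exact hcard (h.1 ▸ f.2)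
  -- pointwise value of ρ
  have hρ : ∀ p : (X → Bool) × X,
      ρ p = if p.1 p.2 = true ∧ ((Finset.univ.filter fun x => p.1 x = true).card = r
            ∨ (Finset.univ.filter fun x => p.1 x = true).card = r - 1)
        then ((B : ℝ≥0∞) * N)⁻¹ else 0 := by
    intro p
    rw [hρdef, PMF.bind_apply]
    have hinner : ∀ g : {g : X → Bool // (Finset.univ.filter fun x => g x = true).card = r - 1},
        ((@PMF.uniformOfFintype X _ hX).map fun y => (Function.update g.1 y true, y)) p
          = if p.1 = Function.update g.1 p.2 true then ((N : ℝ≥0∞))⁻¹ else 0 := by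
      intro g
      rw [PMF.map_apply]
      by_cases hc : p.1 = Function.update g.1 p.2 true
      · rw [tsum_eq_single p.2]
        · rw [if_pos (show p = (Function.update g.1 p.2 true, p.2) from Prod.ext_iff.2 ⟨hc, rfl⟩),
            if_pos hc, PMF.uniformOfFintype_apply, hN]
        · intro y hy; rw [if_neg]; intro hp; exact hy (congrArg Prod.snd hp).symm
      · rw [if_neg hc]
        refine ENNReal.tsum_eq_zero.2 fun y => ?_
        rw [if_neg]
        intro hp
        exact hc (by rw [congrArg Prod.snd hp]; exact congrArg Prod.fst hp)
    simp only [hinner, PMF.uniformOfFintype_apply, ← hB]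
    have hBinv : ((B : ℝ≥0∞) * N)⁻¹ = (B : ℝ≥0∞)⁻¹ * (N : ℝ≥0∞)⁻¹ :=
      ENNReal.mul_inv (Or.inl (Nat.cast_ne_zero.2 (hB ▸ @Fintype.card_ne_zero _ _ hG)))
        (Or.inl (ENNReal.natCast_ne_top B))
    by_cases hpt : p.1 p.2 = true
    · have hmem : p.2 ∈ Finset.univ.filter fun x => p.1 x = true := by simp [hpt]
      have hpos : 0 < (Finset.univ.filter fun x => p.1 x = true).card :=
        Finset.card_pos.2 ⟨p.2, hmem⟩
      by_cases hcr : (Finset.univ.filter fun x => p.1 x = true).card = r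
      · have hg0 : (Finset.univ.filter fun y => Function.update p.1 p.2 false y = true).card
            = r - 1 := by rw [card_update_false p.1 p.2 hpt, hcr]
        rw [tsum_eq_single (⟨Function.update p.1 p.2 false, hg0⟩ :
            {g : X → Bool // (Finset.univ.filter fun x => g x = true).card = r - 1})]
        · rw [if_pos (update_update_true p.1 p.2 hpt).symm, if_pos ⟨hpt, Or.inl hcr⟩, hBinv]
        · intro g hg
          have hne : ¬ p.1 = Function.update g.1 p.2 true := by
            intro he
            obtain ⟨hpx, hcase⟩ := update_eq_cases g.1 p.1 p.2 he.symm
            rcases hcase with h1 | h1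
            · have h2 := g.2
              simp only [h1, hcr] at h2
              clear * - h2 hr1
              omega
            · exact hg (Subtype.ext h1)
          rw [if_neg hne, mul_zero]
      · by_cases hcr' : (Finset.univ.filter fun x => p.1 x = true).card = r - 1
        · rw [tsum_eq_single (⟨p.1, hcr'⟩ :
              {g : X → Bool // (Finset.univ.filter fun x => g x = true).card = r - 1})]
          · rw [if_pos (update_true_self p.1 p.2 hpt).symm, if_pos ⟨hpt, Or.inr hcr'⟩, hBinv]
          · intro g hg
            have hne : ¬ p.1 = Function.update g.1 p.2 true := by
              intro he
              obtain ⟨hpx, hcase⟩ := update_eq_cases g.1 p.1 p.2 he.symm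
              rcases hcase with h1 | h1
              · exact hg (Subtype.ext h1)
              · have h2 := g.2
                simp only [h1, card_update_false p.1 p.2 hpt, hcr'] at h2
                clear * - h2 hpos hcr' hr1
                omega
            rw [if_neg hne, mul_zero]
        · rw [if_neg (by rintro ⟨-, h | h⟩; exacts [hcr h, hcr' h])]
          refine ENNReal.tsum_eq_zero.2 fun g => ?_
          have hne : ¬ p.1 = Function.update g.1 p.2 true := by
            intro he
            obtain ⟨hpx, hcase⟩ := update_eq_cases g.1 p.1 p.2 he.symm
            rcases hcase with h1 | h1
            · exact hcr' (h1 ▸ g.2)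
            · have h2 := g.2
              simp only [h1, card_update_false p.1 p.2 hpt] at h2
              clear * - h2 hpos hcr hcr' hr1
              omega
          rw [if_neg hne, mul_zero]
    · rw [if_neg (fun h => hpt h.1)]
      refine ENNReal.tsum_eq_zero.2 fun g => ?_
      have hne : ¬ p.1 = Function.update g.1 p.2 true := by
        intro he
        exact hpt (by rw [he]; exact Function.update_self _ _ _)
      rw [if_neg hne, mul_zero]
  -- supporting finsets
  set s : Finset ((X → Bool) × X) := Finset.univ.filter
      (fun p => (Finset.univ.filter fun x => p.1 x = true).card = r ∧ p.1 p.2 = true) with hs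
  set s' : Finset ((X → Bool) × X) := Finset.univ.filter
      (fun p => (Finset.univ.filter fun x => p.1 x = true).card = r - 1 ∧ p.1 p.2 = true) with hs'
  clear_value s s'
  have hmem_s : ∀ p : (X → Bool) × X, p ∈ s ↔
      ((Finset.univ.filter fun x => p.1 x = true).card = r ∧ p.1 p.2 = true) := by
    intro p; rw [hs]; simp
  have hmem_s' : ∀ p : (X → Bool) × X, p ∈ s' ↔
      ((Finset.univ.filter fun x => p.1 x = true).card = r - 1 ∧ p.1 p.2 = true) := by
    intro p; rw [hs']; simp
  have hμ' : ∀ p, μ p = if p ∈ s then ((A : ℝ≥0∞) * r)⁻¹ else 0 := by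
    intro p; rw [hμ p]; exact if_congr (hmem_s p).symm rfl rfl
  have hρ' : ∀ p, ρ p = (if p ∈ s then ((B : ℝ≥0∞) * N)⁻¹ else 0)
      + (if p ∈ s' then ((B : ℝ≥0∞) * N)⁻¹ else 0) := by
    intro p
    rw [hρ p]
    by_cases h1 : p ∈ s
    · obtain ⟨hc1, hc2⟩ := (hmem_s p).1 h1
      have h2 : p ∉ s' := by
        rw [hmem_s']
        rintro ⟨hc', -⟩
        rw [hc1] at hc'
        clear * - hc' hr1
        omega
      rw [if_pos ⟨hc2, Or.inl hc1⟩, if_pos h1, if_neg h2, add_zero]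
    · by_cases h2 : p ∈ s'
      · obtain ⟨hc1, hc2⟩ := (hmem_s' p).1 h2
        rw [if_pos ⟨hc2, Or.inr hc1⟩, if_neg h1, if_pos h2, zero_add]
      · rw [if_neg, if_neg h1, if_neg h2, add_zero]
        rintro ⟨hpt, hcc | hcc⟩
        · exact h1 ((hmem_s p).2 ⟨hcc, hpt⟩)
        · exact h2 ((hmem_s' p).2 ⟨hcc, hpt⟩)
  have sum_ite_card : ∀ (t : Finset ((X → Bool) × X)) (c : ℝ≥0∞),
      ∑ p : (X → Bool) × X, (if p ∈ t then c else 0) = t.card * c := by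
    intro t c
    rw [Finset.sum_ite_mem, Finset.univ_inter, Finset.sum_const, nsmul_eq_mul]
  -- total masses
  have hμsum : (s.card : ℝ≥0∞) * ((A : ℝ≥0∞) * r)⁻¹ = 1 := by
    have h1 := μ.tsum_coe
    rw [tsum_fintype] at h1
    rw [← h1]
    simp only [hμ']
    rw [sum_ite_card]
  have hρsum : (s.card : ℝ≥0∞) * ((B : ℝ≥0∞) * N)⁻¹
      + (s'.card : ℝ≥0∞) * ((B : ℝ≥0∞) * N)⁻¹ = 1 := by
    have h1 := ρ.tsum_coe
    rw [tsum_fintype] at h1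
    rw [← h1]
    simp only [hρ']
    rw [Finset.sum_add_distrib, sum_ite_card, sum_ite_card]
  -- cardinality of s'
  have hs'card : s'.card = B * (r - 1) := by
    have hmap : ∀ p ∈ s', p.1 ∈ (Finset.univ.filter
        fun h : X → Bool => (Finset.univ.filter fun x => h x = true).card = r - 1) := by
      intro p hp
      simp only [Finset.mem_filter, Finset.mem_univ, true_and]
      exact ((hmem_s' p).1 hp).1
    rw [Finset.card_eq_sum_card_fiberwise hmap]
    have hfiber : ∀ h ∈ (Finset.univ.filter
        fun h : X → Bool => (Finset.univ.filter fun x => h x = true).card = r - 1),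
        (s'.filter fun p => p.1 = h).card = r - 1 := by
      intro h hh
      rw [Finset.mem_filter] at hh
      have himg : s'.filter (fun p => p.1 = h)
          = (Finset.univ.filter fun x => h x = true).image (fun x => (h, x)) := by
        ext p
        simp only [Finset.mem_filter, Finset.mem_image, Finset.mem_univ, true_and]
        constructor
        · rintro ⟨hp, he⟩
          obtain ⟨hc1, hc2⟩ := (hmem_s' p).1 hp
          exact ⟨p.2, by rw [← he]; exact hc2, by rw [← he]⟩
        · rintro ⟨x, hx, rfl⟩
          exact ⟨(hmem_s' (h, x)).2 ⟨hh.2, hx⟩, rfl⟩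
      rw [himg, Finset.card_image_of_injective _ (fun x y hxy => (Prod.ext_iff.1 hxy).2), hh.2]
    rw [Finset.sum_congr rfl hfiber, Finset.sum_const, smul_eq_mul]
    have hBcard : (Finset.univ.filter
        fun h : X → Bool => (Finset.univ.filter fun x => h x = true).card = r - 1).card = B := by
      rw [hB, Fintype.card_subtype]
    rw [hBcard]
  -- restricted masses
  have hm : μ.toOuterMeasure E = ((s.filter (· ∈ E)).card : ℝ≥0∞) * ((A : ℝ≥0∞) * r)⁻¹ := by
    rw [PMF.toOuterMeasure_apply, tsum_fintype]
    have hpt : ∀ p, E.indicator μ p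
        = if p ∈ s.filter (· ∈ E) then ((A : ℝ≥0∞) * r)⁻¹ else 0 := by
      intro p
      rw [Set.indicator_apply, hμ' p]
      by_cases hE : p ∈ E <;> by_cases hsp : p ∈ s <;>
        simp [hE, hsp, Finset.mem_filter]
    simp only [hpt]
    rw [sum_ite_card]
  have hn : ρ.toOuterMeasure E = ((s.filter (· ∈ E)).card : ℝ≥0∞) * ((B : ℝ≥0∞) * N)⁻¹
      + ((s'.filter (· ∈ E)).card : ℝ≥0∞) * ((B : ℝ≥0∞) * N)⁻¹ := by
    rw [PMF.toOuterMeasure_apply, tsum_fintype]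
    have hpt : ∀ p, E.indicator ρ p
        = (if p ∈ s.filter (· ∈ E) then ((B : ℝ≥0∞) * N)⁻¹ else 0)
          + (if p ∈ s'.filter (· ∈ E) then ((B : ℝ≥0∞) * N)⁻¹ else 0) := by
      intro p
      rw [Set.indicator_apply, hρ' p]
      by_cases hE : p ∈ E <;> by_cases h1 : p ∈ s <;> by_cases h2 : p ∈ s' <;>
        simp [hE, h1, h2, Finset.mem_filter]
    simp only [hpt]
    rw [Finset.sum_add_distrib, sum_ite_card, sum_ite_card]
  -- pass to the reals
  have hA0 : 0 < A := hA ▸ @Fintype.card_pos _ _ hF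
  have hB0 : 0 < B := hB ▸ @Fintype.card_pos _ _ hG
  have hN0 : 0 < N := lt_of_lt_of_le hr1 hrN
  have hbne : ((B : ℝ≥0∞) * N)⁻¹ ≠ ⊤ := by
    simp [ENNReal.inv_ne_top]
    constructor <;> positivity
  have htm : (μ.toOuterMeasure E).toReal
      = ((s.filter (· ∈ E)).card : ℝ) * ((A : ℝ) * (r : ℝ))⁻¹ := by
    rw [hm]
    simp [ENNReal.toReal_mul, ENNReal.toReal_inv]
  have htn : (ρ.toOuterMeasure E).toReal
      = ((s.filter (· ∈ E)).card : ℝ) * ((B : ℝ) * (N : ℝ))⁻¹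
        + ((s'.filter (· ∈ E)).card : ℝ) * ((B : ℝ) * (N : ℝ))⁻¹ := by
    rw [hn, ENNReal.toReal_add (ENNReal.mul_ne_top (ENNReal.natCast_ne_top _) hbne)
      (ENNReal.mul_ne_top (ENNReal.natCast_ne_top _) hbne)]
    simp [ENNReal.toReal_mul, ENNReal.toReal_inv]
  have h1r : (s.card : ℝ) * ((A : ℝ) * (r : ℝ))⁻¹ = 1 := by
    have h := congrArg ENNReal.toReal hμsum
    simpa [ENNReal.toReal_mul, ENNReal.toReal_inv] using h
  have h2r : (s.card : ℝ) * ((B : ℝ) * (N : ℝ))⁻¹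
      + (s'.card : ℝ) * ((B : ℝ) * (N : ℝ))⁻¹ = 1 := by
    have h := congrArg ENNReal.toReal hρsum
    rw [ENNReal.toReal_add (ENNReal.mul_ne_top (ENNReal.natCast_ne_top _) hbne)
      (ENNReal.mul_ne_top (ENNReal.natCast_ne_top _) hbne)] at h
    simpa [ENNReal.toReal_mul, ENNReal.toReal_inv] using h
  have hk : (s'.card : ℝ) * ((B : ℝ) * (N : ℝ))⁻¹ = ((r - 1 : ℕ) : ℝ) / (N : ℝ) := by
    rw [hs'card]
    have hBne : (B : ℝ) ≠ 0 := by positivity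
    have hNne : (N : ℝ) ≠ 0 := by positivity
    push_cast
    field_simp
  have hu0 : (0 : ℝ) ≤ ((s.filter (· ∈ E)).card : ℝ) := Nat.cast_nonneg _
  have hv0 : (0 : ℝ) ≤ ((s'.filter (· ∈ E)).card : ℝ) := Nat.cast_nonneg _
  have hmono1 : ((s.filter (· ∈ E)).card : ℝ) ≤ (s.card : ℝ) :=
    Nat.cast_le.2 (Finset.card_le_card (Finset.filter_subset _ _))
  have hmono2 : ((s'.filter (· ∈ E)).card : ℝ) ≤ (s'.card : ℝ) :=
    Nat.cast_le.2 (Finset.card_le_card (Finset.filter_subset _ _))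
  have hc1nn : (0 : ℝ) ≤ ((A : ℝ) * (r : ℝ))⁻¹ := by positivity
  have hc2nn : (0 : ℝ) ≤ ((B : ℝ) * (N : ℝ))⁻¹ := by positivity
  have hscpos : (0 : ℝ) < (s.card : ℝ) := by
    by_contra hle
    push_neg at hle
    have h0 : (s.card : ℝ) = 0 := le_antisymm hle (Nat.cast_nonneg _)
    rw [h0, zero_mul] at h1r
    norm_num at h1r
  have hc21 : ((B : ℝ) * (N : ℝ))⁻¹ ≤ ((A : ℝ) * (r : ℝ))⁻¹ := by
    have hvv : (0 : ℝ) ≤ (s'.card : ℝ) * ((B : ℝ) * (N : ℝ))⁻¹ :=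
      mul_nonneg (Nat.cast_nonneg _) hc2nn
    nlinarith [h1r, h2r, hscpos]
  rw [htm, htn, abs_le]
  constructor
  · nlinarith [hk, h2r, mul_le_mul_of_nonneg_right hmono2 hc2nn,
      mul_le_mul_of_nonneg_left hc21 hu0]
  · nlinarith [hk, h1r, h2r, mul_le_mul_of_nonneg_right hmono1
      (sub_nonneg.2 hc21), mul_nonneg hv0 hc2nn]
end
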